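/- With the setup of adding a chance start v₀ with distribution p over all non-terminal positions of a chess-like game (G, D, o): if p_v > 0 for every non-terminal v and s is a Nash equilibrium of (G′, D, o, v₀) (in expected payoffs), then s is a subgame perfect Nash equilibrium of (G, D, o). -/

import Mathlib

/-! `n`-person chess-like games: a finite digraph `(V, edge)` whose vertices are
partitioned, via `owner : V → Option (Fin n)`, into positions of the `n`
players and terminals (`owner v = none`), the terminals being exactly the
vertices without outgoing edges.  Strategies are pure and stationary: a profile
`s : Fin n → V → V` selects an outgoing edge at each player position. -/

section NPerson

variable {n : ℕ} {V : Type*} [Fintype V] [DecidableEq V]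

/-- One step of the play under the profile `s` (terminals are fixed points). -/
def nstep (owner : V → Option (Fin n)) (s : Fin n → V → V) (v : V) : V :=
  match owner v with
  | none => v
  | some i => s i v

/-- The vertex reached from `v₀` after `|V|` steps of the play under `s`.
In an acyclic game this is the terminal where the play ends. -/
def nFinal (owner : V → Option (Fin n)) (s : Fin n → V → V) (v0 : V) : V :=
  (nstep owner s)^[Fintype.card V] v0

/-- Outcome of the play from `v₀` under `s`: `some t` if the play reaches the
terminal `t`, and `none` (the cycle outcome `c`) if it cycles forever. -/
def nOutcome (owner : V → Option (Fin n)) (s : Fin n → V → V) (v0 : V) : Option V :=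
  match owner (nFinal owner s v0), nFinal owner s v0 with
  | none, w => some w
  | some _, _ => none

/-- `t` is a valid strategy of player `i`. -/
def nValidFor (edge : V → V → Prop) (owner : V → Option (Fin n)) (i : Fin n)
    (t : V → V) : Prop :=
  ∀ v, owner v = some i → edge v (t v)

end NPerson

section AuxSPNE

variable {n : ℕ} {V : Type*} [Fintype V] [DecidableEq V]

lemma nstep_none' (owner : V → Option (Fin n)) (q : Fin n → V → V) {v : V}
    (h : owner v = none) : nstep owner q v = v := by
  simp [nstep, h]

lemma nstep_some' (owner : V → Option (Fin n)) (q : Fin n → V → V) {v : V} {j : Fin n}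
    (h : owner v = some j) : nstep owner q v = q j v := by
  simp [nstep, h]

lemma nOutcome_congr' (owner : V → Option (Fin n)) {q1 q2 : Fin n → V → V} {v w : V}
    (h : nFinal owner q1 v = nFinal owner q2 w) :
    nOutcome owner q1 v = nOutcome owner q2 w := by
  unfold nOutcome
  rw [h]

lemma nOutcome_some' (owner : V → Option (Fin n)) (q : Fin n → V → V) {v : V} {j : Fin n}
    (h : owner (nFinal owner q v) = some j) : nOutcome owner q v = none := by
  simp [nOutcome, h]

lemma nOutcome_none' (owner : V → Option (Fin n)) (q : Fin n → V → V) {v : V}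
    (h : owner (nFinal owner q v) = none) :
    nOutcome owner q v = some (nFinal owner q v) := by
  simp [nOutcome, h]

lemma descend' {f : V → V} {v : V} {a b Nn : ℕ} (hab : a < b) (hb : b ≤ Nn + 1)
    (heq : f^[a] v = f^[b] v) : ∃ k ≤ Nn, f^[Nn+1] v = f^[k] v := by
  obtain ⟨c, hc⟩ : ∃ c, Nn + 1 = c + b := ⟨Nn + 1 - b, by omega⟩
  refine ⟨c + a, by omega, ?_⟩
  rw [hc, Function.iterate_add_apply, ← heq, ← Function.iterate_add_apply]

lemma iterate_agree {f g : V → V} {v : V} (h : ∀ m, g (f^[m] v) = f (f^[m] v)) :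
    ∀ m, g^[m] v = f^[m] v
  | 0 => rfl
  | (m+1) => by
      rw [Function.iterate_succ_apply', Function.iterate_succ_apply',
        iterate_agree h m, h m]

lemma nOutcome_step' (owner : V → Option (Fin n)) (q : Fin n → V → V) (v : V) :
    nOutcome owner q (nstep owner q v) = nOutcome owner q v := by
  set f := nstep owner q with hf
  set N := Fintype.card V with hN
  rcases h : owner (f^[N] v) with _ | j
  · have hfix : f (f^[N] v) = f^[N] v := nstep_none' owner q h
    have h1 : f^[N] (f v) = f^[N] v := by
      rw [← Function.iterate_succ_apply, Function.iterate_succ_apply', hfix]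
    exact nOutcome_congr' owner (h1 : nFinal owner q (f v) = nFinal owner q v)
  · have hle : ∀ k ≤ N, owner (f^[k] v) ≠ none := by
      intro k hk hnone
      have h2 : f^[N - k] (f^[k] v) = f^[k] v :=
        Function.iterate_fixed (nstep_none' owner q hnone) _
      rw [← Function.iterate_add_apply] at h2
      rw [Nat.sub_add_cancel hk] at h2
      rw [h2, hnone] at h
      exact Option.some_ne_none j h.symm
    have hbig : ∃ k ≤ N, f^[N+1] v = f^[k] v := by
      obtain ⟨a, ha, b, hb, hab, heq⟩ :=
        Finset.exists_ne_map_eq_of_card_lt_of_maps_to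
          (s := Finset.range (N + 2)) (t := (Finset.univ : Finset V))
          (by simp [hN]) (fun x _ => Finset.mem_univ (f^[x] v))
      rcases lt_or_gt_of_ne hab with hlt | hlt
      · exact descend' hlt (by simpa using Nat.lt_succ_iff.mp (Finset.mem_range.mp hb)) heq
      · exact descend' hlt (by simpa using Nat.lt_succ_iff.mp (Finset.mem_range.mp ha)) heq.symm
    obtain ⟨k, hk, hkeq⟩ := hbig
    have h3 : owner (f^[N] (f v)) ≠ none := by
      rw [← Function.iterate_succ_apply, hkeq]
      exact hle k hk
    rcases h4 : owner (f^[N] (f v)) with _ | j'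
    · exact absurd h4 h3
    · rw [nOutcome_some' owner q (h4 : owner (nFinal owner q (f v)) = some j'),
        nOutcome_some' owner q (h : owner (nFinal owner q v) = some j)]

lemma nOutcome_iterate' (owner : V → Option (Fin n)) (q : Fin n → V → V) (v : V) :
    ∀ k, nOutcome owner q ((nstep owner q)^[k] v) = nOutcome owner q v
  | 0 => rfl
  | (k+1) => by
      rw [Function.iterate_succ_apply', nOutcome_step', nOutcome_iterate' owner q v k]

end AuxSPNE

section MvalSPNE

variable {n : ℕ} {V : Type*} [Fintype V] [DecidableEq V]
variable (edge : V → V → Prop) (owner : V → Option (Fin n)) (u : Fin n → Option V → ℝ)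
variable (s : Fin n → V → V) (i : Fin n)

/-- The set of payoffs player `i` can get from `v` by a valid deviation. -/
def ValSet (v : V) : Set ℝ :=
  (fun τ : V → V => u i (nOutcome owner (Function.update s i τ) v)) ''
    {τ | nValidFor edge owner i τ}

/-- The optimal value of player `i` from `v`, against `s`. -/
noncomputable def Mval (v : V) : ℝ := sSup (ValSet edge owner u s i v)

variable {edge owner u s i}

lemma ValSet_finite (v : V) : (ValSet edge owner u s i v).Finite :=
  Set.Finite.image _ (Set.toFinite _)

lemma ValSet_nonempty (hsi : nValidFor edge owner i (s i)) (v : V) :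
    (ValSet edge owner u s i v).Nonempty :=
  ⟨_, ⟨s i, hsi, rfl⟩⟩

lemma Mval_mem (hsi : nValidFor edge owner i (s i)) (v : V) :
    ∃ τ, nValidFor edge owner i τ ∧
      u i (nOutcome owner (Function.update s i τ) v) = Mval edge owner u s i v := by
  obtain ⟨τ, hτ, hτv⟩ := (ValSet_nonempty hsi v).csSup_mem (ValSet_finite v)
  exact ⟨τ, hτ, hτv⟩

lemma le_Mval {τ : V → V} (hτ : nValidFor edge owner i τ) (v : V) :
    u i (nOutcome owner (Function.update s i τ) v) ≤ Mval edge owner u s i v :=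
  le_csSup (ValSet_finite v).bddAbove ⟨τ, hτ, rfl⟩

lemma le_Mval_s (hsi : nValidFor edge owner i (s i)) (v : V) :
    u i (nOutcome owner s v) ≤ Mval edge owner u s i v := by
  have h := le_Mval (u := u) (s := s) (τ := s i) hsi v
  rwa [Function.update_eq_self] at h

/-- Key lemma: the optimal value is non-increasing along one step of the play of
any valid deviation. -/
lemma Mval_step {τ : V → V} (hτ : nValidFor edge owner i τ)
    (hsi : nValidFor edge owner i (s i)) (v : V) :
    Mval edge owner u s i (nstep owner (Function.update s i τ) v) ≤
      Mval edge owner u s i v := by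
  set x := nstep owner (Function.update s i τ) v with hx
  obtain ⟨σ, hσ, hσx⟩ := Mval_mem hsi x
  by_cases hreach : ∃ k, (nstep owner (Function.update s i σ))^[k] x = v
  · obtain ⟨k, hk⟩ := hreach
    have h1 := nOutcome_iterate' owner (Function.update s i σ) x k
    rw [hk] at h1
    calc Mval edge owner u s i x
        = u i (nOutcome owner (Function.update s i σ) x) := hσx.symm
      _ = u i (nOutcome owner (Function.update s i σ) v) := by rw [h1]
      _ ≤ Mval edge owner u s i v := le_Mval hσ v
  · rcases hv : owner v with _ | j
    · rw [hx, nstep_none' owner _ hv]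
    · rcases eq_or_ne j i with rfl | hji
      · -- player `j = i` moves at v
        have hxv : x = τ v := by rw [hx, nstep_some' owner _ hv, Function.update_self]
        set σ' := Function.update σ v (τ v) with hσ'def
        have hσ'valid : nValidFor edge owner j σ' := by
          intro w hw
          rcases eq_or_ne w v with rfl | hwv
          · rw [hσ'def, Function.update_self]; exact hτ w hw
          · rw [hσ'def, Function.update_of_ne hwv]; exact hσ w hw
        have hagree : ∀ y, y ≠ v →
            nstep owner (Function.update s j σ') y = nstep owner (Function.update s j σ) y := by
          intro y hyv
          rcases hoy : owner y with _ | l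
          · rw [nstep_none' owner _ hoy, nstep_none' owner _ hoy]
          · rw [nstep_some' owner _ hoy, nstep_some' owner _ hoy]
            rcases eq_or_ne l j with rfl | hlj
            · rw [Function.update_self, Function.update_self, hσ'def,
                Function.update_of_ne hyv]
            · rw [Function.update_of_ne hlj, Function.update_of_ne hlj]
        have hplays : ∀ m, (nstep owner (Function.update s j σ'))^[m] x =
            (nstep owner (Function.update s j σ))^[m] x :=
          iterate_agree (fun m => hagree _ (fun h => hreach ⟨m, h⟩))
        have hout : nOutcome owner (Function.update s j σ') x =
            nOutcome owner (Function.update s j σ) x :=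
          nOutcome_congr' owner (hplays (Fintype.card V))
        have hstep' : nstep owner (Function.update s j σ') v = x := by
          rw [nstep_some' owner _ hv, Function.update_self, hσ'def, Function.update_self,
            hxv]
        calc Mval edge owner u s j x
            = u j (nOutcome owner (Function.update s j σ) x) := hσx.symm
          _ = u j (nOutcome owner (Function.update s j σ') x) := by rw [hout]
          _ = u j (nOutcome owner (Function.update s j σ')
                (nstep owner (Function.update s j σ') v)) := by rw [hstep']
          _ = u j (nOutcome owner (Function.update s j σ') v) := by
                rw [nOutcome_step']
          _ ≤ Mval edge owner u s j v := le_Mval hσ'valid v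
      · -- another player moves at v
        have hxv : x = s j v := by
          rw [hx, nstep_some' owner _ hv, Function.update_of_ne hji]
        have hstep' : nstep owner (Function.update s i σ) v = x := by
          rw [nstep_some' owner _ hv, Function.update_of_ne hji, hxv]
        calc Mval edge owner u s i x
            = u i (nOutcome owner (Function.update s i σ) x) := hσx.symm
          _ = u i (nOutcome owner (Function.update s i σ)
                (nstep owner (Function.update s i σ) v)) := by rw [hstep']
          _ = u i (nOutcome owner (Function.update s i σ) v) := by rw [nOutcome_step']
          _ ≤ Mval edge owner u s i v := le_Mval hσ v

lemma Mval_iterate {τ : V → V} (hτ : nValidFor edge owner i τ)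
    (hsi : nValidFor edge owner i (s i)) (v : V) :
    ∀ k, Mval edge owner u s i ((nstep owner (Function.update s i τ))^[k] v) ≤
      Mval edge owner u s i v
  | 0 => le_refl _
  | (k+1) => by
      rw [Function.iterate_succ_apply']
      exact le_trans (Mval_step hτ hsi _) (Mval_iterate hτ hsi v k)

end MvalSPNE


/-- conversely, if every non-terminal position gets positive
probability `p v > 0` and `s` is a Nash equilibrium (in expected payoffs) of
the game with the added chance start, then `s` is a subgame perfect Nash
equilibrium of the original chess-like game, i.e. a Nash equilibrium from every
non-terminal initial position. -/
theorem NE_with_chance_start_gives_subgame_perfect_NE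
    {n : ℕ} {V : Type*} [Fintype V] [DecidableEq V]
    (edge : V → V → Prop) (owner : V → Option (Fin n))
    (hterm : ∀ v, owner v = none ↔ ∀ w, ¬ edge v w)
    (u : Fin n → Option V → ℝ)
    (s : Fin n → V → V) (hs : ∀ i, nValidFor edge owner i (s i))
    (p : V → ℝ) (hp : ∀ v, owner v ≠ none → 0 < p v)
    (hp1 : ∑ v ∈ Finset.univ.filter (fun v => owner v ≠ none), p v = 1)
    (hNE : ∀ (i : Fin n) (t : V → V), nValidFor edge owner i t →
      ∑ v ∈ Finset.univ.filter (fun v => owner v ≠ none),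
        p v * u i (nOutcome owner (Function.update s i t) v) ≤
      ∑ v ∈ Finset.univ.filter (fun v => owner v ≠ none),
        p v * u i (nOutcome owner s v)) :
    ∀ (v0 : V), owner v0 ≠ none →
      ∀ (i : Fin n) (t : V → V), nValidFor edge owner i t →
        u i (nOutcome owner (Function.update s i t) v0) ≤
        u i (nOutcome owner s v0) := by
  classical
  by_contra hcon
  push_neg at hcon
  obtain ⟨v0, hv0, i, t, ht, hlt⟩ := hcon
  -- outcome at a terminal is that terminal, for any profile
  have hterm_out : ∀ (q : Fin n → V → V) (v : V), owner v = none →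
      nOutcome owner q v = some v := by
    intro q v hv
    have hfix : nFinal owner q v = v :=
      Function.iterate_fixed (nstep_none' owner q hv) _
    rw [nOutcome_none' owner q (by rw [hfix]; exact hv), hfix]
  -- the bad set
  set B : Finset V :=
    Finset.univ.filter (fun v => u i (nOutcome owner s v) < Mval edge owner u s i v)
    with hB
  have hv0B : v0 ∈ B := by
    rw [hB, Finset.mem_filter]
    exact ⟨Finset.mem_univ _, lt_of_lt_of_le hlt (le_Mval ht v0)⟩
  obtain ⟨v1, hv1B, hv1max⟩ :=
    B.exists_max_image (Mval edge owner u s i) ⟨v0, hv0B⟩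
  have hv1 : u i (nOutcome owner s v1) < Mval edge owner u s i v1 :=
    (Finset.mem_filter.mp hv1B).2
  -- v1 is not a terminal
  have hv1nt : owner v1 ≠ none := by
    intro h
    obtain ⟨τ, hτ, hτv⟩ := Mval_mem (u := u) (hs i) v1
    rw [hterm_out _ _ h] at hτv
    rw [hterm_out s v1 h, ← hτv] at hv1
    exact lt_irrefl _ hv1
  -- optimal strategy from v1
  obtain ⟨t1, ht1, ht1v⟩ := Mval_mem (u := u) (hs i) v1
  set f1 := nstep owner (Function.update s i t1) with hf1
  set P : Set V := Set.range (fun k : ℕ => f1^[k] v1) with hP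
  have hPv1 : v1 ∈ P := ⟨0, rfl⟩
  -- the hybrid deviation
  set t' : V → V := fun v => if v ∈ P then t1 v else s i v with ht'def
  have ht' : nValidFor edge owner i t' := by
    intro v hv
    by_cases hvP : v ∈ P
    · simp only [ht'def, hvP, if_true]; exact ht1 v hv
    · simp only [ht'def, hvP, if_false]; exact hs i v hv
  set g := nstep owner (Function.update s i t') with hg
  have hgP : ∀ y ∈ P, g y = f1 y := by
    intro y hy
    rcases hoy : owner y with _ | l
    · rw [hg, hf1, nstep_none' owner _ hoy, nstep_none' owner _ hoy]
    · rw [hg, hf1, nstep_some' owner _ hoy, nstep_some' owner _ hoy]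
      rcases eq_or_ne l i with rfl | hli
      · rw [Function.update_self, Function.update_self]
        simp only [ht'def, hy, if_true]
      · rw [Function.update_of_ne hli, Function.update_of_ne hli]
  have hgoffP : ∀ y, y ∉ P → g y = nstep owner s y := by
    intro y hy
    rcases hoy : owner y with _ | l
    · rw [hg, nstep_none' owner _ hoy, nstep_none' owner _ hoy]
    · rw [hg, nstep_some' owner _ hoy, nstep_some' owner _ hoy]
      rcases eq_or_ne l i with rfl | hli
      · rw [Function.update_self]
        simp only [ht'def, hy, if_false]
      · rw [Function.update_of_ne hli]
  -- plays under t' starting in P follow t1 and give the optimal outcome of v1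
  have houtP : ∀ x ∈ P, nOutcome owner (Function.update s i t') x =
      nOutcome owner (Function.update s i t1) v1 := by
    rintro x ⟨k, hk⟩
    have hk' : f1^[k] v1 = x := hk
    have hmem : ∀ m, f1^[m] x ∈ P := by
      intro m
      exact ⟨m + k, show f1^[m+k] v1 = f1^[m] x by
        rw [Function.iterate_add_apply, hk']⟩
    have hplays : ∀ m, g^[m] x = f1^[m] x :=
      iterate_agree (fun m => hgP _ (hmem m))
    have h1 : nOutcome owner (Function.update s i t') x =
        nOutcome owner (Function.update s i t1) x :=
      nOutcome_congr' owner (hplays (Fintype.card V))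
    rw [h1, ← hk, nOutcome_iterate']
  have hMP : ∀ x ∈ P, Mval edge owner u s i x ≤ Mval edge owner u s i v1 := by
    rintro x ⟨k, hk⟩
    have hk' : f1^[k] v1 = x := hk
    rw [← hk']
    exact Mval_iterate ht1 (hs i) v1 k
  -- pointwise comparison
  have hpoint : ∀ v, u i (nOutcome owner s v) ≤
      u i (nOutcome owner (Function.update s i t') v) := by
    intro v
    by_cases hre : ∃ k, g^[k] v ∈ P
    · set k := Nat.find hre with hkdef
      have hk : g^[k] v ∈ P := Nat.find_spec hre
      have hpre : ∀ m, m ≤ k → g^[m] v = (nstep owner s)^[m] v := by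
        intro m
        induction m with
        | zero => intro _; rfl
        | succ m ih =>
          intro hm
          have hm' : m < k := hm
          have h1 : g^[m] v ∉ P := Nat.find_min hre hm'
          rw [Function.iterate_succ_apply', Function.iterate_succ_apply',
            ← ih hm'.le]
          exact hgoffP _ h1
      have hxP : (nstep owner s)^[k] v ∈ P := by rw [← hpre k le_rfl]; exact hk
      have h1 : nOutcome owner (Function.update s i t') v =
          nOutcome owner (Function.update s i t1) v1 := by
        rw [← nOutcome_iterate' owner (Function.update s i t') v k]
        exact houtP _ hk
      have h3 : nOutcome owner s v = nOutcome owner s ((nstep owner s)^[k] v) :=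
        (nOutcome_iterate' owner s v k).symm
      have h4 : u i (nOutcome owner s ((nstep owner s)^[k] v)) ≤
          Mval edge owner u s i ((nstep owner s)^[k] v) := le_Mval_s (hs i) _
      have h5 := hMP _ hxP
      rw [h1, h3, ht1v]
      exact le_trans h4 h5
    · push_neg at hre
      have hplays : ∀ m, g^[m] v = (nstep owner s)^[m] v := by
        intro m
        induction m with
        | zero => rfl
        | succ m ih =>
          rw [Function.iterate_succ_apply', Function.iterate_succ_apply', ← ih]
          exact hgoffP _ (hre m)
      have h1 : nOutcome owner (Function.update s i t') v = nOutcome owner s v :=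
        nOutcome_congr' owner (hplays (Fintype.card V))
      rw [h1]
  -- strict improvement at v1
  have hstrict : u i (nOutcome owner s v1) <
      u i (nOutcome owner (Function.update s i t') v1) := by
    rw [houtP v1 hPv1, ht1v]
    exact hv1
  -- contradiction with the equilibrium property
  have hsum := hNE i t' ht'
  have hlt2 : ∑ v ∈ Finset.univ.filter (fun v => owner v ≠ none),
      p v * u i (nOutcome owner s v) <
      ∑ v ∈ Finset.univ.filter (fun v => owner v ≠ none),
      p v * u i (nOutcome owner (Function.update s i t') v) := by
    refine Finset.sum_lt_sum (fun v hv => ?_) ⟨v1, ?_, ?_⟩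
    · exact mul_le_mul_of_nonneg_left (hpoint v)
        (le_of_lt (hp v (Finset.mem_filter.mp hv).2))
    · exact Finset.mem_filter.mpr ⟨Finset.mem_univ _, hv1nt⟩
    · exact mul_lt_mul_of_pos_left hstrict (hp v1 hv1nt)
  exact absurd hsum (not_le.mpr hlt2)
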